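/- Let n ≥ 2, let S ⊆ ℝ^n be a compact set such that σ_S is a finite measure, and let θ : ℝ^n → ℝ be continuous. Let ε ∈ ℝ ∖ {0} and let t ∈ ℝ^n with t ∉ S. Then ∫ G_n(ε·t − y)·θ(y/ε) dσ_{ε·S}(y) = |ε| · ∫ G_n(t − s)·θ(s) dσ_S(s) − δ_{2,n}·(|ε|·log|ε|/(2π)) · ∫ θ(s) dσ_S(s), where δ_{2,n} is the Kronecker delta (so the logarithmic term is present only for n = 2). -/

import Mathlib

open MeasureTheory RealInnerProductSpace Pointwise
open scoped ENNReal NNReal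

/-- The measure `σ_S`: the `(n-1)`-dimensional Hausdorff measure on `ℝⁿ` restricted to `S`. -/
noncomputable def bdryMeasure (n : ℕ) (S : Set (EuclideanSpace ℝ (Fin n))) :
    Measure (EuclideanSpace ℝ (Fin n)) := (μH[(n : ℝ) - 1]).restrict S

/-- `s_n`: the `(n-1)`-dimensional Hausdorff measure of the unit sphere of `ℝⁿ`. -/
noncomputable def sphereArea (n : ℕ) : ℝ :=
  (μH[(n : ℝ) - 1] (Metric.sphere (0 : EuclideanSpace ℝ (Fin n)) 1)).toReal

/-- The fundamental solution `G_n` of `-Δ` in `ℝⁿ`. -/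
noncomputable def fundSol (n : ℕ) (x : EuclideanSpace ℝ (Fin n)) : ℝ :=
  if n = 2 then -(1 / (2 * Real.pi)) * Real.log ‖x‖
  else (1 / (((n : ℝ) - 2) * sphereArea n)) * ‖x‖ ^ ((2 : ℝ) - (n : ℝ))

/-- The partial derivative in the `i`-th coordinate direction. -/
noncomputable def pderiv' {n : ℕ} (i : Fin n) (F : EuclideanSpace ℝ (Fin n) → ℝ) :
    EuclideanSpace ℝ (Fin n) → ℝ :=
  fun x => lineDeriv ℝ F x (EuclideanSpace.single i 1)

/-- The iterated partial derivative `D^β F` of multi-index `β`. -/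
noncomputable def multiDeriv {n : ℕ} (β : Fin n → ℕ) (F : EuclideanSpace ℝ (Fin n) → ℝ) :
    EuclideanSpace ℝ (Fin n) → ℝ :=
  (List.finRange n).foldr (fun i G => (pderiv' i)^[β i] G) F

lemma bdryMeasure_smul (n : ℕ) (hn : 2 ≤ n) (S : Set (EuclideanSpace ℝ (Fin n)))
    (ε : ℝ) (hε : ε ≠ 0) :
    bdryMeasure n (ε • S) = (‖ε‖₊ ^ ((n:ℝ)-1) : ℝ≥0∞) •
      Measure.map (fun s => ε • s) (bdryMeasure n S) := by
  have hd : (0:ℝ) ≤ (n:ℝ) - 1 := by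
    have : (2:ℝ) ≤ n := by exact_mod_cast hn
    linarith
  have hm : Measurable (fun s : EuclideanSpace ℝ (Fin n) => ε • s) :=
    (continuous_const_smul ε).measurable
  ext A hA
  rw [bdryMeasure, Measure.restrict_apply hA, Measure.smul_apply,
    Measure.map_apply hm hA, bdryMeasure, Measure.restrict_apply (hm hA)]
  have hset : A ∩ ε • S = ε • ((fun s : EuclideanSpace ℝ (Fin n) => ε • s) ⁻¹' A ∩ S) := by
    rw [Set.smul_set_inter₀ hε]
    congr 1
    · ext x
      simp only [Set.mem_smul_set, Set.mem_preimage]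
      constructor
      · rintro hx; exact ⟨ε⁻¹ • x, by simpa [smul_smul, hε] using hx, by simp [smul_smul, hε]⟩
      · rintro ⟨y, hy, rfl⟩; exact hy
  rw [hset, Measure.hausdorffMeasure_smul₀ hd hε]
  simp [ENNReal.smul_def, ENNReal.coe_rpow_of_ne_zero (nnnorm_ne_zero_iff.mpr hε)]

lemma fundSol_measurable (n : ℕ) : Measurable (fundSol n) := by
  unfold fundSol
  split_ifs
  · exact (Real.measurable_log.comp measurable_norm).const_mul _
  · fun_prop

lemma fundSol_continuousAt (n : ℕ) {x : EuclideanSpace ℝ (Fin n)} (hx : x ≠ 0) :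
    ContinuousAt (fundSol n) x := by
  have hnx : ‖x‖ ≠ 0 := norm_ne_zero_iff.mpr hx
  unfold fundSol
  split_ifs
  · exact ((Real.continuousAt_log hnx).comp continuous_norm.continuousAt).const_mul _
  · exact ((Real.continuousAt_rpow_const _ _ (Or.inl hnx)).comp
      continuous_norm.continuousAt).const_mul _

lemma fundSol_smul_two (ε : ℝ) (hε : ε ≠ 0) (x : EuclideanSpace ℝ (Fin 2)) (hx : x ≠ 0) :
    fundSol 2 (ε • x) = fundSol 2 x - Real.log |ε| / (2 * Real.pi) := by
  have hnx : ‖x‖ ≠ 0 := norm_ne_zero_iff.mpr hx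
  simp only [fundSol, if_pos rfl, norm_smul, Real.norm_eq_abs]
  rw [Real.log_mul (abs_ne_zero.mpr hε) hnx]
  norm_num
  ring

lemma fundSol_smul_ne_two (n : ℕ) (hn : n ≠ 2) (ε : ℝ) (hε : ε ≠ 0)
    (x : EuclideanSpace ℝ (Fin n)) :
    fundSol n (ε • x) = |ε| ^ ((2:ℝ) - n) * fundSol n x := by
  simp only [fundSol, if_neg hn, norm_smul, Real.norm_eq_abs]
  rw [Real.mul_rpow (abs_nonneg ε) (norm_nonneg x)]
  ring

/-- Change of variables in the single layer integral over a scaled compact set, evaluated at a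
scaled point: `∫_{ε•S} G_n(ε•t - y) θ(y/ε) dσ_{ε•S}(y) = |ε| ∫_S G_n(t - s) θ(s) dσ_S(s)
- δ_{2,n} (|ε| log |ε| / (2π)) ∫_S θ(s) dσ_S(s)`. -/
theorem stmt4 (n : ℕ) (hn : 2 ≤ n) (S : Set (EuclideanSpace ℝ (Fin n)))
    (hS : IsCompact S) (hfin : IsFiniteMeasure (bdryMeasure n S))
    (θ : EuclideanSpace ℝ (Fin n) → ℝ) (hθ : Continuous θ)
    (ε : ℝ) (hε : ε ≠ 0) (t : EuclideanSpace ℝ (Fin n)) (ht : t ∉ S) :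
    ∫ y, fundSol n (ε • t - y) * θ (ε⁻¹ • y) ∂(bdryMeasure n (ε • S)) =
      |ε| * ∫ s, fundSol n (t - s) * θ s ∂(bdryMeasure n S) -
        (if n = 2 then (1 : ℝ) else 0) * (|ε| * Real.log |ε| / (2 * Real.pi)) *
          ∫ s, θ s ∂(bdryMeasure n S) := by
  have hSm : MeasurableSet S := hS.isClosed.measurableSet
  set μ := bdryMeasure n S with hμ
  have hm : Measurable (fun s : EuclideanSpace ℝ (Fin n) => ε • s) :=
    (continuous_const_smul ε).measurable
  have hg : Measurable (fun y : EuclideanSpace ℝ (Fin n) =>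
      fundSol n (ε • t - y) * θ (ε⁻¹ • y)) :=
    ((fundSol_measurable n).comp (measurable_const.sub measurable_id)).mul
      (hθ.measurable.comp (continuous_const_smul ε⁻¹).measurable)
  have habs : (0:ℝ) < |ε| := abs_pos.mpr hε
  have hc : ((‖ε‖₊ ^ ((n:ℝ)-1) : ℝ≥0∞)).toReal = |ε| ^ ((n:ℝ)-1) := by
    rw [← ENNReal.toReal_rpow]
    simp [Real.norm_eq_abs]
  rw [bdryMeasure_smul n hn S ε hε, integral_smul_measure,
    integral_map hm.aemeasurable hg.aestronglyMeasurable]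
  simp only [smul_eq_mul, hc]
  have hsimp : ∀ s : EuclideanSpace ℝ (Fin n),
      fundSol n (ε • t - ε • s) * θ (ε⁻¹ • ε • s) = fundSol n (ε • (t - s)) * θ s := by
    intro s
    rw [smul_sub, inv_smul_smul₀ hε]
  simp only [hsimp]
  by_cases h2 : n = 2
  · subst h2
    -- integrability
    have hco : ContinuousOn (fun s => fundSol 2 (t - s)) S := fun s hs =>
      (((fundSol_continuousAt 2 (sub_ne_zero.mpr (fun h => ht (by rw [h]; exact hs)))).comp
        ((continuous_const.sub continuous_id).continuousAt))).continuousWithinAt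
    obtain ⟨C, hC⟩ := hS.exists_bound_of_continuousOn (hco.mul hθ.continuousOn)
    have hf1 : Integrable (fun s => fundSol 2 (t - s) * θ s) μ := by
      refine Integrable.mono' (integrable_const C)
        (((fundSol_measurable 2).comp (measurable_const.sub measurable_id)).mul
          hθ.measurable).aestronglyMeasurable ?_
      exact (ae_restrict_mem hSm).mono fun s hs => hC s hs
    obtain ⟨C₂, hC₂⟩ := hS.exists_bound_of_continuousOn hθ.continuousOn
    have hθi : Integrable θ μ := by
      refine Integrable.mono' (integrable_const C₂) hθ.aestronglyMeasurable ?_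
      exact (ae_restrict_mem hSm).mono fun s hs => hC₂ s hs
    have hae : ∀ᵐ s ∂μ, fundSol 2 (ε • (t - s)) * θ s =
        fundSol 2 (t - s) * θ s - (Real.log |ε| / (2 * Real.pi)) * θ s := by
      refine (ae_restrict_mem hSm).mono fun s hs => ?_
      rw [fundSol_smul_two ε hε _ (sub_ne_zero.mpr (fun h => ht (by rw [h]; exact hs)))]
      ring
    rw [integral_congr_ae hae, integral_sub hf1 (hθi.const_mul _), integral_const_mul]
    have he1 : |ε| ^ (((2:ℕ):ℝ) - 1) = |ε| := by norm_num
    rw [he1, if_pos rfl]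
    ring
  · have heq : ∀ s : EuclideanSpace ℝ (Fin n),
        fundSol n (ε • (t - s)) * θ s = |ε| ^ ((2:ℝ) - n) * (fundSol n (t - s) * θ s) := by
      intro s
      rw [fundSol_smul_ne_two n h2 ε hε]
      ring
    simp only [heq]
    rw [integral_const_mul, if_neg h2]
    rw [← mul_assoc, ← Real.rpow_add habs]
    norm_num
    exact Or.inl rfl
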